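/- Every totally refinable compactly supported distribution φ on ℝ can be written as φ = D^m ψ, where m ≥ 0 is an integer and ψ is a totally refinable compactly supported distribution with ψ(1) ≠ 0 (equivalently, Fourier transform of ψ nonzero at 0). -/

import Mathlib

open scoped Topology
open MeasureTheory

noncomputable section

/-- The space of infinitely differentiable functions `ℝ → ℝ`, as a submodule of `ℝ → ℝ`. -/
def SmoothR : Submodule ℝ (ℝ → ℝ) where
  carrier := {f | ContDiff ℝ (⊤ : ℕ∞) f}
  add_mem' {f g} hf hg := by exact ContDiff.add (Set.mem_setOf_eq ▸ hf) (Set.mem_setOf_eq ▸ hg)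
  zero_mem' := by exact (contDiff_const : ContDiff ℝ (⊤ : ℕ∞) fun _ : ℝ => (0:ℝ))
  smul_mem' c f hf := by
    have hf' : ContDiff ℝ (⊤ : ℕ∞) f := hf
    show ContDiff ℝ (⊤ : ℕ∞) (c • f)
    exact hf'.const_smul c

/-- Distributions: linear functionals on smooth functions. -/
abbrev DistR := SmoothR →ₗ[ℝ] ℝ

/-- A distribution vanishes on an open set `U` if it kills every smooth function
supported in `U`. -/
def VanishesOn (T : DistR) (U : Set ℝ) : Prop :=
  ∀ f : SmoothR, tsupport (f : ℝ → ℝ) ⊆ U → T f = 0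

/-- The support of a distribution: complement of the largest open set on which it vanishes. -/
def distSupp (T : DistR) : Set ℝ :=
  {x : ℝ | ¬ ∃ U : Set ℝ, IsOpen U ∧ x ∈ U ∧ VanishesOn T U}

/-- The continuity/compact support estimate characterizing members of `𝓔'(ℝ)`:
a compactly supported distribution of finite order. -/
def IsCompactDist (T : DistR) : Prop :=
  ∃ (K : Set ℝ) (C : ℝ) (N : ℕ), IsCompact K ∧
    ∀ f : SmoothR, |T f| ≤ C * ⨆ (j : Fin (N + 1)) (x : K), |iteratedDeriv j (f : ℝ → ℝ) x|

/-- The monomial `x ↦ x ^ j` as a smooth function. -/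
lemma mem_smoothR {f : ℝ → ℝ} : f ∈ SmoothR ↔ ContDiff ℝ (⊤ : ℕ∞) f := Iff.rfl

def monomialS (j : ℕ) : SmoothR := ⟨fun x => x ^ j, mem_smoothR.mpr (contDiff_id.pow j)⟩

def derivSmooth (f : SmoothR) : SmoothR :=
  ⟨deriv (f : ℝ → ℝ), mem_smoothR.mpr (contDiff_infty_iff_deriv.mp (mem_smoothR.mp f.2)).2⟩

/-- Differentiation as a linear map on smooth functions. -/
def derivLM : SmoothR →ₗ[ℝ] SmoothR where
  toFun := derivSmooth
  map_add' f g := Subtype.ext (by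
    funext x
    exact deriv_add (((mem_smoothR.mp f.2).differentiable (by simp)).differentiableAt)
      (((mem_smoothR.mp g.2).differentiable (by simp)).differentiableAt))
  map_smul' c f := Subtype.ext (by
    funext x
    exact deriv_const_smul c (((mem_smoothR.mp f.2).differentiable (by simp)).differentiableAt))

/-- Distributional derivative: `(D T) f = -T f'`. -/
def Dop (T : DistR) : DistR := -(T ∘ₗ derivLM)

/-- Iterated distributional derivative. -/
def Dpow (m : ℕ) : DistR → DistR := Dop^[m]

/-- Precomposition of a smooth function with the affine map `x ↦ (x + h) / l`. -/
def affineMapS (l h : ℝ) (f : SmoothR) : SmoothR :=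
  ⟨fun x => (f : ℝ → ℝ) ((x + h) / l),
    mem_smoothR.mpr ((mem_smoothR.mp f.2).comp ((contDiff_id.add contDiff_const).div_const l))⟩

def compAffine (l h : ℝ) : SmoothR →ₗ[ℝ] SmoothR where
  toFun := affineMapS l h
  map_add' f g := Subtype.ext rfl
  map_smul' c f := Subtype.ext rfl

/-- The affine pullback `φ(l·−h)` of a distribution `φ`, acting by
`⟨φ(l·−h), f⟩ = |l|⁻¹ ⟨φ, f((·+h)/l)⟩`. -/
def affinePullD (l h : ℝ) (T : DistR) : DistR := |l|⁻¹ • (T ∘ₗ compAffine l h)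

/-- The Dirac distribution at a point. -/
def diracD (a : ℝ) : DistR where
  toFun f := (f : ℝ → ℝ) a
  map_add' f g := rfl
  map_smul' c f := rfl

/-- `φ` is `p`-refinable: `φ = Σ_j c_j φ(p·−j)` for finitely many coefficients. -/
def IsRefinable (p : ℕ) (φ : DistR) : Prop :=
  ∃ (s : Finset ℤ) (c : ℤ → ℝ), φ = ∑ j ∈ s, c j • affinePullD (p : ℝ) (j : ℝ) φ

/-- `φ` is totally refinable: it is nonzero and `p`-refinable for every integer `p ≥ 2`. -/
def TotallyRefinable (φ : DistR) : Prop :=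
  φ ≠ 0 ∧ ∀ p : ℕ, 2 ≤ p → IsRefinable p φ

namespace AuxTR

open Set

lemma smooth_coe (f : SmoothR) : ContDiff ℝ (⊤ : ℕ∞) (f : ℝ → ℝ) := f.2

lemma cont_coe (f : SmoothR) : Continuous (f : ℝ → ℝ) := (smooth_coe f).continuous

lemma diffable (f : SmoothR) : Differentiable ℝ (f : ℝ → ℝ) :=
  (smooth_coe f).differentiable (by simp)

lemma coe_derivLM (f : SmoothR) : (derivLM f : ℝ → ℝ) = deriv (f : ℝ → ℝ) := rfl

lemma coe_derivLM_pow (n : ℕ) (f : SmoothR) :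
    (((derivLM ^ n : Module.End ℝ SmoothR) f : SmoothR) : ℝ → ℝ) = deriv^[n] (f : ℝ → ℝ) := by
  induction n with
  | zero => simp [Module.End.one_apply]
  | succ n ih =>
      have h1 : (derivLM ^ (n+1) : Module.End ℝ SmoothR) f
          = derivLM ((derivLM ^ n : Module.End ℝ SmoothR) f) := by
        rw [pow_succ']; rfl
      rw [h1, coe_derivLM, ih, Function.iterate_succ_apply']

lemma smooth_J (f : SmoothR) :
    ContDiff ℝ (⊤ : ℕ∞) (fun x => ∫ t in (0:ℝ)..x, (f : ℝ → ℝ) t) := by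
  rw [contDiff_infty_iff_deriv]
  constructor
  · intro x
    exact (((cont_coe f).integral_hasStrictDerivAt 0 x).hasDerivAt).differentiableAt
  · have h : deriv (fun x => ∫ t in (0:ℝ)..x, (f : ℝ → ℝ) t) = (f : ℝ → ℝ) :=
      funext fun x => Continuous.deriv_integral _ (cont_coe f) 0 x
    rw [h]; exact smooth_coe f

/-- Integration from `0` as a linear map on smooth functions. -/
def JLM : Module.End ℝ SmoothR where
  toFun f := ⟨fun x => ∫ t in (0:ℝ)..x, (f : ℝ → ℝ) t, mem_smoothR.mpr (smooth_J f)⟩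
  map_add' f g := Subtype.ext (funext fun x => by
    show (∫ t in (0:ℝ)..x, ((f + g : SmoothR) : ℝ → ℝ) t) = _
    have : ((f + g : SmoothR) : ℝ → ℝ) = fun t => (f : ℝ → ℝ) t + (g : ℝ → ℝ) t := rfl
    rw [this, intervalIntegral.integral_add ((cont_coe f).intervalIntegrable _ _)
      ((cont_coe g).intervalIntegrable _ _)]
    rfl)
  map_smul' c f := Subtype.ext (funext fun x => by
    show (∫ t in (0:ℝ)..x, ((c • f : SmoothR) : ℝ → ℝ) t) = _
    have : ((c • f : SmoothR) : ℝ → ℝ) = fun t => c • (f : ℝ → ℝ) t := rfl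
    rw [this, intervalIntegral.integral_smul]
    rfl)

lemma coe_JLM (f : SmoothR) (x : ℝ) : (JLM f : ℝ → ℝ) x = ∫ t in (0:ℝ)..x, (f : ℝ → ℝ) t := rfl

lemma deriv_JLM (f : SmoothR) : deriv (JLM f : ℝ → ℝ) = (f : ℝ → ℝ) :=
  funext fun x => Continuous.deriv_integral _ (cont_coe f) 0 x

lemma derivLM_JLM (f : SmoothR) : derivLM (JLM f) = f := Subtype.ext (deriv_JLM f)

lemma JLM_zero (f : SmoothR) : (JLM f : ℝ → ℝ) 0 = 0 := by
  rw [coe_JLM, intervalIntegral.integral_same]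

lemma coe_sub (f g : SmoothR) : ((f - g : SmoothR) : ℝ → ℝ) = (f : ℝ → ℝ) - (g : ℝ → ℝ) := rfl

lemma coe_smul (c : ℝ) (f : SmoothR) : ((c • f : SmoothR) : ℝ → ℝ) = c • (f : ℝ → ℝ) := rfl

lemma JLM_derivLM (f : SmoothR) :
    JLM (derivLM f) = f - ((f : ℝ → ℝ) 0) • monomialS 0 := by
  apply Subtype.ext
  funext x
  have h : (∫ t in (0:ℝ)..x, deriv (f : ℝ → ℝ) t) = (f : ℝ → ℝ) x - (f : ℝ → ℝ) 0 :=
    intervalIntegral.integral_deriv_eq_sub (fun y _ => (diffable f).differentiableAt)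
      ((cont_coe (derivLM f)).intervalIntegrable _ _)
  show (∫ t in (0:ℝ)..x, (derivLM f : ℝ → ℝ) t) = _
  rw [coe_derivLM, h]
  show _ = (f : ℝ → ℝ) x - ((f : ℝ → ℝ) 0) • ((monomialS 0 : SmoothR) : ℝ → ℝ) x
  show _ = (f : ℝ → ℝ) x - ((f : ℝ → ℝ) 0) • (x ^ 0)
  simp

lemma JLM_mono (k : ℕ) : JLM (monomialS k) = ((k : ℝ) + 1)⁻¹ • monomialS (k + 1) := by
  apply Subtype.ext
  funext x
  show (∫ t in (0:ℝ)..x, t ^ k) = ((k : ℝ) + 1)⁻¹ • (x ^ (k + 1))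
  rw [integral_pow]
  simp [div_eq_inv_mul]

lemma JLM_pow_mono0 (m : ℕ) :
    (JLM ^ m) (monomialS 0) = ((m.factorial : ℝ))⁻¹ • monomialS m := by
  induction m with
  | zero => simp [Module.End.one_apply]
  | succ m ih =>
      have h1 : (JLM ^ (m+1)) (monomialS 0) = JLM ((JLM ^ m) (monomialS 0)) := by
        rw [pow_succ']; rfl
      rw [h1, ih, _root_.map_smul, JLM_mono, smul_smul]
      congr 1
      rw [Nat.factorial_succ]
      push_cast
      rw [mul_inv]
      ring

lemma JLM_pow_succ (n : ℕ) (f : SmoothR) : (JLM ^ (n+1)) f = JLM ((JLM ^ n) f) := by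
  rw [pow_succ']; rfl

lemma deriv_iter_JLM_pow {j m : ℕ} (h : j ≤ m) (f : SmoothR) :
    deriv^[j] (((JLM ^ m) f : SmoothR) : ℝ → ℝ) = (((JLM ^ (m - j)) f : SmoothR) : ℝ → ℝ) := by
  induction j generalizing m with
  | zero => simp
  | succ j ih =>
      obtain ⟨m, rfl⟩ : ∃ m', m = m' + 1 := ⟨m - 1, by omega⟩
      rw [Function.iterate_succ_apply, JLM_pow_succ, deriv_JLM, ih (by omega)]
      have h2 : m + 1 - (j + 1) = m - j := by omega
      rw [h2]

lemma deriv_iter_JLM_pow_ge {j m : ℕ} (h : m ≤ j) (f : SmoothR) :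
    deriv^[j] (((JLM ^ m) f : SmoothR) : ℝ → ℝ) = deriv^[j - m] (f : ℝ → ℝ) := by
  have : j = (j - m) + m := by omega
  rw [this, Function.iterate_add_apply, deriv_iter_JLM_pow le_rfl f]
  simp [Module.End.one_apply]

/-- The Taylor polynomial of `f` at `0` of degree `< m`, as a smooth function. -/
def taylorS (m : ℕ) (f : SmoothR) : SmoothR :=
  ∑ j ∈ Finset.range m, (deriv^[j] (f : ℝ → ℝ) 0 / j.factorial) • monomialS j

lemma JLM_pow_derivLM_pow (m : ℕ) (f : SmoothR) :
    (JLM ^ m) ((derivLM ^ m : Module.End ℝ SmoothR) f) = f - taylorS m f := by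
  induction m with
  | zero => simp [taylorS, Module.End.one_apply]
  | succ m ih =>
      have hd : (derivLM ^ (m+1) : Module.End ℝ SmoothR) f
          = derivLM ((derivLM ^ m : Module.End ℝ SmoothR) f) := by rw [pow_succ']; rfl
      have hJ : ∀ g : SmoothR, (JLM ^ (m+1)) g = (JLM ^ m) (JLM g) := fun g => by
        rw [pow_succ]; rfl
      rw [hd, hJ, JLM_derivLM, map_sub, ih, _root_.map_smul, JLM_pow_mono0, coe_derivLM_pow]
      have ht : taylorS (m+1) f
          = taylorS m f + (deriv^[m] ((f : ℝ → ℝ)) 0 / m.factorial) • monomialS m := by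
        rw [taylorS, Finset.sum_range_succ]; rfl
      rw [ht, sub_add_eq_sub_sub]
      congr 1
      rw [smul_smul, div_eq_mul_inv]

lemma Dop_apply (T : DistR) (f : SmoothR) : Dop T f = -(T (derivLM f)) := rfl

/-- `Dop` as a linear endomorphism of distributions. -/
def DopL : Module.End ℝ DistR where
  toFun := Dop
  map_add' S T := by ext f; simp [Dop_apply]; ring
  map_smul' c T := by ext f; simp [Dop_apply]

lemma Dpow_eq (m : ℕ) (T : DistR) : Dpow m T = (DopL ^ m) T := by
  induction m with
  | zero => simp [Dpow, Module.End.one_apply]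
  | succ m ih =>
      have : (DopL ^ (m+1)) T = DopL ((DopL ^ m) T) := by rw [pow_succ']; rfl
      rw [this, ← ih, Dpow, Function.iterate_succ_apply', Dpow]
      rfl

lemma Dpow_apply (m : ℕ) (T : DistR) (f : SmoothR) :
    Dpow m T f = (-1 : ℝ) ^ m * T ((derivLM ^ m : Module.End ℝ SmoothR) f) := by
  induction m generalizing f with
  | zero => simp [Dpow, Module.End.one_apply]
  | succ m ih =>
      rw [Dpow, Function.iterate_succ_apply']
      show Dop (Dpow m T) f = _
      rw [Dop_apply, ih]
      have : (derivLM ^ (m+1) : Module.End ℝ SmoothR) f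
          = (derivLM ^ m : Module.End ℝ SmoothR) (derivLM f) := by rw [pow_succ]; rfl
      rw [this]
      ring

lemma Dop_inj : Function.Injective Dop := by
  intro S T h
  ext f
  have h2 := congrArg (fun (U : DistR) => U (JLM f)) h
  simp only [Dop_apply, derivLM_JLM, neg_inj] at h2
  exact h2

lemma Dpow_inj (m : ℕ) : Function.Injective (Dpow m) := Function.Injective.iterate Dop_inj m

lemma affinePullD_apply (l h : ℝ) (T : DistR) (f : SmoothR) :
    affinePullD l h T f = |l|⁻¹ * T (compAffine l h f) := rfl

lemma derivLM_compAffine (l h : ℝ) (f : SmoothR) :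
    derivLM (compAffine l h f) = l⁻¹ • compAffine l h (derivLM f) := by
  apply Subtype.ext
  funext x
  have h1 : HasDerivAt (f : ℝ → ℝ) (deriv (f : ℝ → ℝ) ((x + h) / l)) ((x + h) / l) :=
    ((diffable f) _).hasDerivAt
  have h2 : HasDerivAt (fun y : ℝ => (y + h) / l) (1 / l) x := by
    simpa using (((hasDerivAt_id x).add_const h).div_const l)
  have h3 : HasDerivAt (fun y => (f : ℝ → ℝ) ((y + h) / l))
      (deriv (f : ℝ → ℝ) ((x + h) / l) * (1 / l)) x := h1.comp x h2
  show deriv (fun y => (f : ℝ → ℝ) ((y + h) / l)) x = l⁻¹ • (deriv (f : ℝ → ℝ) ((x + h) / l))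
  rw [h3.deriv]
  simp [smul_eq_mul]
  ring

lemma Dop_affine (l h : ℝ) (hl : l ≠ 0) (T : DistR) :
    Dop (affinePullD l h T) = l • affinePullD l h (Dop T) := by
  ext f
  show -(|l|⁻¹ * T (compAffine l h (derivLM f)))
      = l * (|l|⁻¹ * -(T (derivLM (compAffine l h f))))
  rw [derivLM_compAffine, _root_.map_smul, smul_eq_mul]
  field_simp

lemma Dpow_affine (m : ℕ) (l h : ℝ) (hl : l ≠ 0) (T : DistR) :
    Dpow m (affinePullD l h T) = l ^ m • affinePullD l h (Dpow m T) := by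
  induction m with
  | zero => simp [Dpow]
  | succ m ih =>
      rw [Dpow, Function.iterate_succ_apply']
      show Dop (Dpow m (affinePullD l h T)) = _
      rw [ih]
      have hs : Dop (l ^ m • affinePullD l h (Dpow m T))
          = l ^ m • Dop (affinePullD l h (Dpow m T)) := DopL.map_smul _ _
      rw [hs, Dop_affine l h hl, smul_smul, ← pow_succ]
      rw [Function.iterate_succ_apply']
      rfl

lemma Jbound {R M : ℝ} (hR : 1 ≤ R) (hM : 0 ≤ M) {h : SmoothR}
    (hh : ∀ y ∈ Icc (-R) R, |(h : ℝ → ℝ) y| ≤ M) :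
    ∀ (k : ℕ), ∀ x ∈ Icc (-R) R, |(((JLM ^ k) h : SmoothR) : ℝ → ℝ) x| ≤ R ^ k * M := by
  intro k
  induction k with
  | zero => intro x hx; simpa [Module.End.one_apply] using hh x hx
  | succ k ih =>
      intro x hx
      rw [JLM_pow_succ]
      have h0R : (0:ℝ) ∈ Icc (-R) R := ⟨by linarith, by linarith⟩
      have hsub : Set.uIoc (0:ℝ) x ⊆ Icc (-R) R :=
        subset_trans Set.uIoc_subset_uIcc (Set.uIcc_subset_Icc h0R hx)
      have hb : ∀ t ∈ Set.uIoc (0:ℝ) x,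
          ‖(((JLM ^ k) h : SmoothR) : ℝ → ℝ) t‖ ≤ R ^ k * M := fun t ht => ih t (hsub ht)
      have hint := intervalIntegral.norm_integral_le_of_norm_le_const hb
      have hxR : |x| ≤ R := abs_le.mpr ⟨hx.1, hx.2⟩
      have hRkM : (0:ℝ) ≤ R ^ k * M := mul_nonneg (pow_nonneg (by linarith) k) hM
      calc |(JLM ((JLM ^ k) h) : ℝ → ℝ) x|
          ≤ R ^ k * M * |x - 0| := hint
        _ = R ^ k * M * |x| := by rw [sub_zero]
        _ ≤ R ^ k * M * R := mul_le_mul_of_nonneg_left (by linarith) hRkM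
        _ = R ^ (k + 1) * M := by ring

lemma JLM_pow_mono (k i : ℕ) : ∃ c : ℝ, (JLM ^ k) (monomialS i) = c • monomialS (i + k) := by
  induction k with
  | zero => exact ⟨1, by simp [Module.End.one_apply]⟩
  | succ k ih =>
      obtain ⟨c, hc⟩ := ih
      refine ⟨c * (((i + k : ℕ) : ℝ) + 1)⁻¹, ?_⟩
      have : (JLM ^ (k + 1)) (monomialS i) = (JLM ^ k) (JLM (monomialS i)) := by
        rw [pow_succ]; rfl
      rw [JLM_pow_succ, hc, _root_.map_smul, JLM_mono, smul_smul]
      rfl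

lemma diracD_apply (x : ℝ) (f : SmoothR) : diracD x f = (f : ℝ → ℝ) x := rfl

lemma exists_moment (φ : DistR) (hc : IsCompactDist φ) (hne : φ ≠ 0) :
    ∃ k, φ (monomialS k) ≠ 0 := by
  by_contra hmom
  push_neg at hmom
  apply hne
  obtain ⟨K, C, N, hK, hb⟩ := hc
  obtain ⟨R, hR1, hKR'⟩ := hK.isBounded.subset_closedBall_lt 1 0
  rw [Real.closedBall_eq_Icc] at hKR'
  have hKR : K ⊆ Icc (-R) R := by simpa using hKR'
  have hR : (1:ℝ) ≤ R := le_of_lt hR1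
  refine LinearMap.ext fun f => ?_
  rw [LinearMap.zero_apply]
  have key : ∀ ε : ℝ, 0 < ε → |φ f| ≤ (max C 0 * R ^ N) * ε := by
    intro ε hε
    set fN : SmoothR := (derivLM ^ N : Module.End ℝ SmoothR) f with hfN
    obtain ⟨p, hp⟩ := exists_polynomial_near_of_continuousOn (-R) R (fun x => (fN : ℝ → ℝ) x)
      ((cont_coe fN).continuousOn) ε hε
    set QS : SmoothR := ∑ i ∈ Finset.range (p.natDegree + 1), p.coeff i • monomialS i with hQS
    have hQSval : ∀ x : ℝ, (QS : ℝ → ℝ) x = p.eval x := by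
      intro x
      have h1 : (QS : ℝ → ℝ) x = diracD x QS := rfl
      rw [h1, hQS, map_sum, Polynomial.eval_eq_sum_range]
      refine Finset.sum_congr rfl fun i _ => ?_
      rw [_root_.map_smul]
      rfl
    set g : SmoothR := (JLM ^ N) (fN - QS) with hg
    have hdiff : ∀ y ∈ Icc (-R) R, |((fN - QS : SmoothR) : ℝ → ℝ) y| ≤ ε := by
      intro y hy
      rw [coe_sub, Pi.sub_apply, hQSval]
      rw [abs_sub_comm]
      exact le_of_lt (hp y hy)
    have hgj : ∀ j : ℕ, j ≤ N → ∀ x ∈ Icc (-R) R,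
        |deriv^[j] ((g : SmoothR) : ℝ → ℝ) x| ≤ R ^ N * ε := by
      intro j hj x hx
      rw [hg, deriv_iter_JLM_pow hj]
      calc |(((JLM ^ (N - j)) (fN - QS) : SmoothR) : ℝ → ℝ) x|
          ≤ R ^ (N - j) * ε := Jbound hR (le_of_lt hε) hdiff (N - j) x hx
        _ ≤ R ^ N * ε := mul_le_mul_of_nonneg_right
            (pow_le_pow_right₀ hR (Nat.sub_le _ _)) (le_of_lt hε)
    have hφtay : φ (taylorS N f) = 0 := by
      rw [taylorS, map_sum]
      refine Finset.sum_eq_zero fun j _ => ?_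
      rw [_root_.map_smul, hmom, smul_zero]
    have hφQ : φ ((JLM ^ N) QS) = 0 := by
      rw [hQS, map_sum, map_sum]
      refine Finset.sum_eq_zero fun i _ => ?_
      rw [_root_.map_smul, _root_.map_smul]
      obtain ⟨c, hc⟩ := JLM_pow_mono N i
      rw [hc, _root_.map_smul, hmom]
      simp
    have hφg : φ g = φ f := by
      have hgeq : g = (f - taylorS N f) - (JLM ^ N) QS := by
        rw [hg, map_sub, hfN, JLM_pow_derivLM_pow]
      rw [hgeq, map_sub, map_sub, hφtay, hφQ, sub_zero, sub_zero]
    have hS : (⨆ (j : Fin (N + 1)) (x : K), |iteratedDeriv j ((g : SmoothR) : ℝ → ℝ) x|)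
        ≤ R ^ N * ε := by
      have hRN : (0:ℝ) ≤ R ^ N * ε := mul_nonneg (pow_nonneg (by linarith) N) (le_of_lt hε)
      refine Real.iSup_le (fun j => Real.iSup_le (fun x => ?_) hRN) hRN
      rw [iteratedDeriv_eq_iterate]
      exact hgj j (Nat.lt_succ_iff.mp j.2) x (hKR x.2)
    have hSnn : (0:ℝ) ≤ ⨆ (j : Fin (N + 1)) (x : K), |iteratedDeriv j ((g : SmoothR) : ℝ → ℝ) x| :=
      Real.iSup_nonneg fun j => Real.iSup_nonneg fun x => abs_nonneg _
    calc |φ f| = |φ g| := by rw [hφg]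
      _ ≤ C * ⨆ (j : Fin (N + 1)) (x : K), |iteratedDeriv j ((g : SmoothR) : ℝ → ℝ) x| := hb g
      _ ≤ max C 0 * ⨆ (j : Fin (N + 1)) (x : K), |iteratedDeriv j ((g : SmoothR) : ℝ → ℝ) x| :=
          mul_le_mul_of_nonneg_right (le_max_left _ _) hSnn
      _ ≤ max C 0 * (R ^ N * ε) := mul_le_mul_of_nonneg_left hS (le_max_right _ _)
      _ = (max C 0 * R ^ N) * ε := by ring
  have h0 : |φ f| ≤ 0 := by
    by_contra hpos
    push_neg at hpos
    set Kc : ℝ := max C 0 * R ^ N with hKc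
    have hKc0 : 0 ≤ Kc := mul_nonneg (le_max_right _ _) (pow_nonneg (by linarith) N)
    have hk2 := key (|φ f| / (2 * (Kc + 1))) (by positivity)
    rw [div_eq_mul_inv] at hk2
    have hinv : (2 * (Kc + 1))⁻¹ * (2 * (Kc + 1)) = 1 := by
      rw [inv_mul_cancel₀]; positivity
    nlinarith [mul_pos hpos (by positivity : (0:ℝ) < (2 * (Kc + 1))⁻¹)]
  exact abs_nonpos_iff.mp h0

lemma psi_compact (φ : DistR) (hc : IsCompactDist φ) (m : ℕ) :
    IsCompactDist (((-1:ℝ)) ^ m • (φ ∘ₗ (JLM ^ m : Module.End ℝ SmoothR))) := by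
  obtain ⟨K, C, N, hK, hb⟩ := hc
  obtain ⟨R, hR1, hKR'⟩ := hK.isBounded.subset_closedBall_lt 1 0
  rw [Real.closedBall_eq_Icc] at hKR'
  have hKR : K ⊆ Icc (-R) R := by simpa using hKR'
  have hR : (1:ℝ) ≤ R := hR1.le
  refine ⟨Icc (-R) R, max C 0 * R ^ m, N, isCompact_Icc, fun f => ?_⟩
  set S' := ⨆ (j : Fin (N + 1)) (x : (Icc (-R) R : Set ℝ)),
    |iteratedDeriv j ((f : ℝ → ℝ)) x| with hS'
  have hcont : ∀ j : ℕ, Continuous fun y : ℝ => |deriv^[j] ((f : ℝ → ℝ)) y| := by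
    intro j
    have h1 := cont_coe ((derivLM ^ j : Module.End ℝ SmoothR) f)
    rw [coe_derivLM_pow] at h1
    exact h1.abs
  have hbdd : ∀ j : Fin (N+1), BddAbove (Set.range
      fun x : (Icc (-R) R : Set ℝ) => |iteratedDeriv (j : ℕ) ((f : ℝ → ℝ)) x|) := by
    intro j
    have h2 : Continuous fun x : (Icc (-R) R : Set ℝ) =>
        |iteratedDeriv (j : ℕ) ((f : ℝ → ℝ)) x| := by
      simp only [iteratedDeriv_eq_iterate]
      exact (hcont j).comp continuous_subtype_val
    exact (isCompact_range h2).bddAbove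
  have hbddF : BddAbove (Set.range fun j : Fin (N+1) =>
      ⨆ x : (Icc (-R) R : Set ℝ), |iteratedDeriv (j : ℕ) ((f : ℝ → ℝ)) x|) :=
    Set.Finite.bddAbove (Set.finite_range _)
  have hS'nn : 0 ≤ S' := Real.iSup_nonneg fun j => Real.iSup_nonneg fun x => abs_nonneg _
  have hjle : ∀ (j : ℕ), j ≤ N → ∀ y ∈ Icc (-R) R, |deriv^[j] ((f : ℝ → ℝ)) y| ≤ S' := by
    intro j hj y hy
    set jf : Fin (N+1) := ⟨j, Nat.lt_succ_of_le hj⟩ with hjf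
    have h1 := le_ciSup (hbdd jf) (⟨y, hy⟩ : (Icc (-R) R : Set ℝ))
    have h2 := le_ciSup hbddF jf
    have h3 : |iteratedDeriv j ((f : ℝ → ℝ)) y| ≤ S' := le_trans h1 h2
    rw [iteratedDeriv_eq_iterate] at h3
    exact h3
  have hfle : ∀ y ∈ Icc (-R) R, |((f : ℝ → ℝ)) y| ≤ S' := by
    intro y hy
    simpa using hjle 0 (Nat.zero_le N) y hy
  have happ : |(((-1:ℝ)) ^ m • (φ ∘ₗ (JLM ^ m : Module.End ℝ SmoothR))) f|
      = |φ ((JLM ^ m) f)| := by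
    show |((-1:ℝ)) ^ m • (φ ((JLM ^ m) f))| = _
    rw [smul_eq_mul, abs_mul, abs_pow, abs_neg, abs_one, one_pow, one_mul]
  rw [happ]
  have hRmS : (0:ℝ) ≤ R ^ m * S' := mul_nonneg (pow_nonneg (by linarith) m) hS'nn
  have hterm : ∀ (j : Fin (N+1)) (x : K),
      |iteratedDeriv (j : ℕ) ((((JLM ^ m) f : SmoothR) : ℝ → ℝ)) x| ≤ R ^ m * S' := by
    intro j x
    have hx : (x : ℝ) ∈ Icc (-R) R := hKR x.2
    rw [iteratedDeriv_eq_iterate]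
    by_cases hjm : (j : ℕ) ≤ m
    · rw [deriv_iter_JLM_pow hjm]
      calc |(((JLM ^ (m - (j:ℕ))) f : SmoothR) : ℝ → ℝ) x|
          ≤ R ^ (m - (j:ℕ)) * S' := Jbound hR hS'nn hfle (m - (j:ℕ)) x hx
        _ ≤ R ^ m * S' := mul_le_mul_of_nonneg_right
            (pow_le_pow_right₀ hR (Nat.sub_le _ _)) hS'nn
    · push_neg at hjm
      rw [deriv_iter_JLM_pow_ge hjm.le]
      have hj2 : (j : ℕ) - m ≤ N := le_trans (Nat.sub_le _ _) (Nat.lt_succ_iff.mp j.2)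
      calc |deriv^[(j:ℕ) - m] ((f : ℝ → ℝ)) x| ≤ S' := hjle _ hj2 x hx
        _ ≤ R ^ m * S' := le_mul_of_one_le_left hS'nn (one_le_pow₀ hR)
  have hSnn2 : (0:ℝ) ≤ ⨆ (j : Fin (N + 1)) (x : K),
      |iteratedDeriv j ((((JLM ^ m) f : SmoothR) : ℝ → ℝ)) x| :=
    Real.iSup_nonneg fun j => Real.iSup_nonneg fun x => abs_nonneg _
  have hSle : (⨆ (j : Fin (N + 1)) (x : K),
      |iteratedDeriv j ((((JLM ^ m) f : SmoothR) : ℝ → ℝ)) x|) ≤ R ^ m * S' :=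
    Real.iSup_le (fun j => Real.iSup_le (fun x => hterm j x) hRmS) hRmS
  calc |φ ((JLM ^ m) f)|
      ≤ C * ⨆ (j : Fin (N + 1)) (x : K),
        |iteratedDeriv j ((((JLM ^ m) f : SmoothR) : ℝ → ℝ)) x| := hb _
    _ ≤ max C 0 * ⨆ (j : Fin (N + 1)) (x : K),
        |iteratedDeriv j ((((JLM ^ m) f : SmoothR) : ℝ → ℝ)) x| :=
        mul_le_mul_of_nonneg_right (le_max_left _ _) hSnn2
    _ ≤ max C 0 * (R ^ m * S') := mul_le_mul_of_nonneg_left hSle (le_max_right _ _)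
    _ = (max C 0 * R ^ m) * S' := by ring

end AuxTR

open AuxTR in
/-- Every totally refinable compactly supported distribution `φ` can be written as
`φ = D^m ψ` with `ψ` totally refinable, compactly supported and `ψ(1) ≠ 0`. -/
theorem totally_refinable_eq_derivative (φ : DistR) (hφc : IsCompactDist φ)
    (hφt : TotallyRefinable φ) :
    ∃ (m : ℕ) (ψ : DistR), IsCompactDist ψ ∧ TotallyRefinable ψ ∧
      ψ (monomialS 0) ≠ 0 ∧ Dpow m ψ = φ := by
  classical
  have hk : ∃ k, φ (monomialS k) ≠ 0 := exists_moment φ hφc hφt.1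
  set m := Nat.find hk with hmdef
  have hm : φ (monomialS m) ≠ 0 := Nat.find_spec hk
  have hmin : ∀ k, k < m → φ (monomialS k) = 0 := fun k hkm =>
    not_not.mp (Nat.find_min hk hkm)
  set ψ : DistR := ((-1:ℝ)) ^ m • (φ ∘ₗ (JLM ^ m : Module.End ℝ SmoothR)) with hψdef
  have hψ_apply : ∀ f : SmoothR, ψ f = (-1:ℝ) ^ m * φ ((JLM ^ m) f) := fun f => rfl
  have hsq : ((-1:ℝ)) ^ m * ((-1:ℝ)) ^ m = 1 := by
    rw [← mul_pow]; norm_num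
  have htay : ∀ f : SmoothR, φ (taylorS m f) = 0 := by
    intro f
    rw [taylorS, map_sum]
    refine Finset.sum_eq_zero fun j hj => ?_
    rw [_root_.map_smul, hmin j (Finset.mem_range.mp hj), smul_zero]
  have hDψ : Dpow m ψ = φ := by
    refine LinearMap.ext fun f => ?_
    rw [Dpow_apply, hψ_apply, ← mul_assoc, hsq, one_mul, JLM_pow_derivLM_pow, map_sub,
      htay, sub_zero]
  have hψ1 : ψ (monomialS 0) ≠ 0 := by
    rw [hψ_apply, JLM_pow_mono0, _root_.map_smul, smul_eq_mul]
    exact mul_ne_zero (pow_ne_zero _ (by norm_num))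
      (mul_ne_zero (inv_ne_zero (by exact_mod_cast Nat.factorial_ne_zero m)) hm)
  have hψc : IsCompactDist ψ := psi_compact φ hφc m
  have hψne : ψ ≠ 0 := fun h => hψ1 (by rw [h]; rfl)
  refine ⟨m, ψ, hψc, ⟨hψne, ?_⟩, hψ1, hDψ⟩
  intro p hp
  obtain ⟨s, c, href⟩ := hφt.2 p hp
  have hp0 : ((p : ℕ) : ℝ) ≠ 0 := Nat.cast_ne_zero.mpr (by omega)
  refine ⟨s, fun j => c j / (p : ℝ) ^ m, ?_⟩
  apply Dpow_inj m
  rw [hDψ, Dpow_eq, map_sum]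
  have hsum : ∀ j ∈ s, (DopL ^ m) ((c j / (p : ℝ) ^ m) • affinePullD (p : ℝ) (j : ℝ) ψ)
      = c j • affinePullD (p : ℝ) (j : ℝ) φ := by
    intro j hj
    rw [_root_.map_smul, ← Dpow_eq, Dpow_affine m _ _ hp0, hDψ, smul_smul,
      div_mul_cancel₀ _ (pow_ne_zero m hp0)]
  rw [Finset.sum_congr rfl hsum]
  exact href

end
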